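/- Let X be a Hilbert space and f : X → ℝ ∪ {+∞} be lower semicontinuous on X. If there exists φ̄ ∈ Φ_lsc with φ̄(x) < f(x) for all x, then f is Φ_lsc-convex, i.e. f(x) = sup{φ(x) : φ ∈ Φ_lsc, φ ≤ f} for all x ∈ X. -/

import Mathlib

def IsSupport {X : Type*} (Φ : Set (X → ℝ)) (f : X → EReal) (φ : X → ℝ) : Prop :=
  φ ∈ Φ ∧ ∀ x, (φ x : EReal) ≤ f x

def PhiConvex {X : Type*} (Φ : Set (X → ℝ)) (f : X → EReal) : Prop :=
  ∀ x, f x = ⨆ φ : {φ : X → ℝ // IsSupport Φ f φ}, ((φ : X → ℝ) x : EReal)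

/-- The class `Φ_lsc` of quadratically shifted continuous affine functions:
`x ↦ −a‖x‖² + ⟨ℓ, x⟩ + c` with `a ≥ 0`. -/
def PhiLsc (X : Type*) [NormedAddCommGroup X] [InnerProductSpace ℝ X] :
    Set (X → ℝ) :=
  {φ | ∃ (a : ℝ) (ℓ : X →L[ℝ] ℝ) (c : ℝ), 0 ≤ a ∧
    ∀ x, φ x = -a * ‖x‖ ^ 2 + ℓ x + c}

theorem lsc_minorized_implies_phiLsc_convex
    {X : Type*} [NormedAddCommGroup X] [InnerProductSpace ℝ X] [CompleteSpace X]
    (f : X → EReal) (hbot : ∀ x, f x ≠ ⊥)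
    (hlsc : LowerSemicontinuous f)
    (hminor : ∃ φ ∈ PhiLsc X, ∀ x, (φ x : EReal) < f x) :
    PhiConvex (PhiLsc X) f := by
  obtain ⟨φ₀, ⟨a, ℓ, c, ha, hφ₀⟩, hlt⟩ := hminor
  intro x₀
  refine le_antisymm ?_ (iSup_le fun φ => φ.2.2 x₀)
  -- It suffices to show every real r < f x₀ is ≤ the sup.
  by_contra hcon
  push_neg at hcon
  set S := ⨆ φ : {φ : X → ℝ // IsSupport (PhiLsc X) f φ}, ((φ : X → ℝ) x₀ : EReal) with hS
  obtain ⟨r, hSr, hrf⟩ := EReal.exists_between_coe_real hcon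
  -- lower semicontinuity at x₀
  obtain ⟨δ, hδ, hball⟩ := Metric.eventually_nhds_iff_ball.1 (hlsc x₀ r hrf)
  -- choose the coefficient n
  set K : ℝ := |r| + 2 * a * ‖x₀‖ ^ 2 + ‖ℓ‖ * ‖x₀‖ + |c| with hK
  have hK0 : 0 ≤ K := by positivity
  set n : ℝ := 2 * a + ‖ℓ‖ / δ + K / δ ^ 2 with hn
  have hn0 : 0 ≤ n := by positivity
  -- the candidate support function
  set φ : X → ℝ := fun x => r - n * ‖x - x₀‖ ^ 2 with hφ
  have hmem : φ ∈ PhiLsc X := by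
    refine ⟨n, (2 * n) • innerSL ℝ x₀, r - n * ‖x₀‖ ^ 2, hn0, fun x => ?_⟩
    have : ‖x - x₀‖ ^ 2 = ‖x‖ ^ 2 - 2 * inner ℝ x x₀ + ‖x₀‖ ^ 2 :=
      @norm_sub_sq_real X _ _ x x₀
    simp only [hφ, ContinuousLinearMap.smul_apply, innerSL_apply_apply, smul_eq_mul]
    rw [this, real_inner_comm x₀ x]; ring
  have hle : ∀ x, (φ x : EReal) ≤ f x := by
    intro x
    by_cases hx : ‖x - x₀‖ < δ
    · have hfx : (r : EReal) < f x := hball x (by simpa [Metric.mem_ball, dist_eq_norm] using hx)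
      refine le_trans ?_ hfx.le
      have : φ x ≤ r := by
        have : 0 ≤ n * ‖x - x₀‖ ^ 2 := by positivity
        simp only [hφ]; linarith
      exact_mod_cast this
    · push_neg at hx
      refine le_trans ?_ (hlt x).le
      have hb : φ x ≤ φ₀ x := by
        rw [hφ₀ x]
        set u := ‖x - x₀‖ with hu
        have hu0 : 0 < u := lt_of_lt_of_le hδ hx
        have h1 : ‖x‖ ≤ u + ‖x₀‖ := by
          calc ‖x‖ = ‖(x - x₀) + x₀‖ := by rw [sub_add_cancel]
          _ ≤ u + ‖x₀‖ := norm_add_le _ _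
        have h2 : -( ‖ℓ‖ * ‖x‖) ≤ ℓ x := neg_abs_le (ℓ x) |>.trans' (by
          have := ℓ.le_opNorm x
          have habs : |ℓ x| ≤ ‖ℓ‖ * ‖x‖ := by simpa [Real.norm_eq_abs] using this
          linarith)
        -- key inequalities from u ≥ δ > 0
        have h3 : ‖ℓ‖ / δ * u ^ 2 ≥ ‖ℓ‖ * u := by
          rw [ge_iff_le, div_mul_eq_mul_div, le_div_iff₀ hδ]
          have : ‖ℓ‖ * u * δ ≤ ‖ℓ‖ * u * u := by
            apply mul_le_mul_of_nonneg_left hx (by positivity)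
          nlinarith [norm_nonneg ℓ]
        have h4 : K / δ ^ 2 * u ^ 2 ≥ K := by
          rw [ge_iff_le, div_mul_eq_mul_div, le_div_iff₀ (by positivity)]
          have : δ ^ 2 ≤ u ^ 2 := by nlinarith
          nlinarith
        have hx2 : ‖x‖ ^ 2 ≤ (u + ‖x₀‖) ^ 2 := pow_le_pow_left₀ (norm_nonneg x) h1 2
        have h5 : a * ‖x‖ ^ 2 ≤ 2 * a * u ^ 2 + 2 * a * ‖x₀‖ ^ 2 := by
          nlinarith [mul_le_mul_of_nonneg_left hx2 ha,
            mul_le_mul_of_nonneg_left (sq_nonneg (u - ‖x₀‖)) ha]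
        have hr : r ≤ |r| := le_abs_self r
        have hc : -c ≤ |c| := neg_le_abs c
        have hl1 : ‖ℓ‖ * ‖x‖ ≤ ‖ℓ‖ * (u + ‖x₀‖) :=
          mul_le_mul_of_nonneg_left h1 (norm_nonneg ℓ)
        have hnu : n * u ^ 2 = 2 * a * u ^ 2 + ‖ℓ‖ / δ * u ^ 2 + K / δ ^ 2 * u ^ 2 := by
          rw [hn]; ring
        simp only [hφ]
        rw [← hu]
        clear_value u n K
        linarith [h2, h3, h4, h5, hr, hc, hnu, hl1]
      exact_mod_cast hb
  have hsupp : IsSupport (PhiLsc X) f φ := ⟨hmem, hle⟩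
  have : (φ x₀ : EReal) ≤ S :=
    le_iSup (fun ψ : {ψ : X → ℝ // IsSupport (PhiLsc X) f ψ} => ((ψ : X → ℝ) x₀ : EReal))
      ⟨φ, hsupp⟩
  have hφx₀ : φ x₀ = r := by simp [hφ]
  rw [hφx₀] at this
  exact absurd this (not_le.mpr hSr)
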